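/- Let H be a tree with a root of height at most η and spread at most ζ ≥ 2, let t ≥ 1, and set c = (η + 3)! · |V(H)|. Then every H-free graph G that does not contain K_{t,t} as a subgraph has degeneracy at most (|V(H)| · ζ · t)^c, and hence χ(G) ≤ (|V(H)| · ζ · t)^c + 1. -/

import Mathlib

set_option linter.unusedSectionVars false
set_option linter.unusedVariables false
set_option maxHeartbeats 2000000

/-- `H` is contained in `G` as a (not necessarily induced) subgraph. -/
def ContainsSub {W V : Type*} (H : SimpleGraph W) (G : SimpleGraph V) : Prop :=
  ∃ f : W → V, Function.Injective f ∧ ∀ a b, H.Adj a b → G.Adj (f a) (f b)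

/-- `K_d(t)`: the complete `d`-partite graph with all parts of size `t`. -/
def Kpart (d t : ℕ) : SimpleGraph ((_ : Fin d) × Fin t) :=
  SimpleGraph.completeMultipartiteGraph (fun _ : Fin d => Fin t)

/-- `τ_d(G)`: the largest `t` such that `G` contains `K_d(t)` as a subgraph. -/
noncomputable def tauPart {V : Type*} (d : ℕ) (G : SimpleGraph V) : ℕ :=
  sSup {t : ℕ | ContainsSub (Kpart d t) G}

open Finset

universe u

open scoped Classical in
noncomputable def nbr {V : Type*} [Fintype V] (G : SimpleGraph V) (x : V) : Finset V :=
  Finset.univ.filter (fun w => G.Adj x w)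

noncomputable def cnbr {V : Type*} [Fintype V] [DecidableEq V] (G : SimpleGraph V) (x : V) :
    Finset V := insert x (nbr G x)

noncomputable def cl {V : Type*} [Fintype V] [DecidableEq V] (G : SimpleGraph V)
    (F : Finset V) : Finset V := F.biUnion (cnbr G)

open scoped Classical in
noncomputable def ndom {V : Type*} [Fintype V] [DecidableEq V] (G : SimpleGraph V)
    (t : ℕ) (B : Finset V) : Finset V :=
  Finset.univ.filter (fun x => 2*t*((B \ cnbr G x).card) < B.card)

def sig (t s0 j : ℕ) : ℕ := s0 * (4*t)^j
section basic
variable {V : Type*} [Fintype V] [DecidableEq V] (G : SimpleGraph V)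

lemma mem_nbr {x w : V} : w ∈ nbr G x ↔ G.Adj x w := by simp [nbr]

lemma cl_empty : cl G (∅ : Finset V) = ∅ := by simp [cl]
/-- From `t` vertices all adjacent to `t` other common vertices, we get `K_{t,t}`. -/
lemma ktt_of {t : ℕ} (A B : Finset V) (hA : A.card = t) (hB : B.card = t)
    (hd : Disjoint A B) (hadj : ∀ a ∈ A, ∀ b ∈ B, G.Adj a b) :
    ContainsSub (Kpart 2 t) G := by
  classical
  let eA : Fin t ≃ {x // x ∈ A} := (A.equivFin.trans (Equiv.cast (by rw [hA]))).symm
  let eB : Fin t ≃ {x // x ∈ B} := (B.equivFin.trans (Equiv.cast (by rw [hB]))).symm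
  refine ⟨fun p => if p.1 = 0 then (eA p.2 : V) else (eB p.2 : V), ?_, ?_⟩
  · rintro ⟨i, k⟩ ⟨j, l⟩ h
    by_cases hi : i = 0 <;> by_cases hj : j = 0 <;> simp [hi, hj] at h
    · obtain rfl : k = l := h
      simp [hi, hj]
    · exact absurd ((eA k).2) (fun hmem => (Finset.disjoint_left.1 hd hmem (h ▸ (eB l).2)))
    · exact absurd ((eA l).2) (fun hmem => (Finset.disjoint_left.1 hd hmem (h ▸ (eB k).2)))
    · obtain rfl : k = l := h
      have : i = j := by omega
      simp [this]
  · rintro ⟨i, k⟩ ⟨j, l⟩ hadj'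
    have hij : i ≠ j := hadj'
    by_cases hi : i = 0
    · have hj : j ≠ 0 := fun h => hij (h ▸ hi)
      simpa [hi, hj] using hadj _ (eA k).2 _ (eB l).2
    · have hj : j = 0 := by omega
      simpa [hi, hj] using (hadj _ (eA l).2 _ (eB k).2).symm
/-- Key K_{t,t}-freeness consequence: few near-dominators. -/
lemma ndom_card_le {t : ℕ} (hK : ¬ ContainsSub (Kpart 2 t) G) (ht : 1 ≤ t)
    (B : Finset V) (hB : 4*t+2 ≤ B.card) : (ndom G t B).card ≤ t - 1 := by
  by_contra hlt
  push_neg at hlt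
  have htle : t ≤ (ndom G t B).card := by omega
  obtain ⟨T, hTsub, hTcard⟩ := Finset.exists_subset_card_eq htle
  -- U : elements of B adjacent-or-equal to every member of T
  set U : Finset V := B \ T.biUnion (fun x => B \ cnbr G x) with hU
  have hUcard : 2*t + 2 ≤ U.card := by
    have h1 : (T.biUnion (fun x => B \ cnbr G x)).card ≤
        ∑ x ∈ T, (B \ cnbr G x).card := Finset.card_biUnion_le
    have h2 : ∑ x ∈ T, 2*t*(B \ cnbr G x).card ≤ ∑ x ∈ T, (B.card - 1) := by
      apply Finset.sum_le_sum
      intro x hx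
      have := (Finset.mem_filter.1 (hTsub hx)).2
      omega
    rw [Finset.sum_const, hTcard, smul_eq_mul] at h2
    rw [← Finset.mul_sum] at h2
    have h3 : 2 * ∑ x ∈ T, (B \ cnbr G x).card ≤ B.card - 1 := by
      by_contra hc
      push_neg at hc
      nlinarith [hB, hc, h2]
    have h4 : U.card ≥ B.card - (T.biUnion (fun x => B \ cnbr G x)).card :=
      le_card_sdiff _ _
    omega
  have hUsub : ∀ u ∈ U, ∀ x ∈ T, u ∈ cnbr G x := by
    intro u hu x hx
    rw [hU, Finset.mem_sdiff] at hu
    by_contra hnc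
    exact hu.2 (Finset.mem_biUnion.2 ⟨x, hx, Finset.mem_sdiff.2 ⟨hu.1, hnc⟩⟩)
  -- pick t elements of U \ T
  have hUT : t ≤ (U \ T).card := by
    have := le_card_sdiff T U
    omega
  obtain ⟨C, hCsub, hCcard⟩ := Finset.exists_subset_card_eq hUT
  apply hK
  apply ktt_of G T C hTcard hCcard
  · exact Finset.disjoint_left.2 (fun a haT haC =>
      (Finset.mem_sdiff.1 (hCsub haC)).2 haT)
  · intro a haT b hbC
    have hbU := (Finset.mem_sdiff.1 (hCsub hbC)).1
    have hbcn := hUsub b hbU a haT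
    have hba : b ≠ a := fun h => (Finset.mem_sdiff.1 (hCsub hbC)).2 (h ▸ haT)
    rcases Finset.mem_insert.1 hbcn with h | h
    · exact absurd h hba
    · exact (mem_nbr G).1 h
end basic

section core
variable {V : Type*} [Fintype V] [DecidableEq V]

open scoped Classical in
noncomputable def pool (G : SimpleGraph V) (t s0 : ℕ) : ℕ → ℕ → Finset V → V → Finset V
  | 0, _, _, _ => ∅
  | h+1, j, F, y => (nbr G y \ cl G F).filter
      (fun w => h = 0 ∨ sig t s0 j ≤ (pool G t s0 h j (insert y F) w).card)

def viable (G : SimpleGraph V) (t s0 : ℕ) (h j : ℕ) (F : Finset V) (y : V) : Prop :=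
  h = 0 ∨ sig t s0 j ≤ (pool G t s0 h j F y).card

open scoped Classical in
noncomputable def killer (G : SimpleGraph V) (t s0 : ℕ) : ℕ → ℕ → Finset V → V → Finset V
  | 0, _, _, _ => ∅
  | h+1, j, F, y =>
      Finset.univ.filter (fun x =>
        x ∈ ndom G t (pool G t s0 (h+1) j F y) ∨
        (pool G t s0 (h+1) j F y).card <
          4*t*(((pool G t s0 (h+1) j F y).filter
            (fun w => x ∈ killer G t s0 h j (insert y F) w)).card))

variable (G : SimpleGraph V) (t s0 : ℕ)

lemma mem_pool_succ {h j : ℕ} {F : Finset V} {y w : V} :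
    w ∈ pool G t s0 (h+1) j F y ↔
      w ∈ nbr G y ∧ w ∉ cl G F ∧ viable G t s0 h j (insert y F) w := by
  classical
  rw [pool]
  simp only [Finset.mem_filter, Finset.mem_sdiff, viable]
  tauto

lemma viable_zero (j : ℕ) (F : Finset V) (y : V) : viable G t s0 0 j F y := Or.inl rfl

lemma viable_card {h j : ℕ} {F : Finset V} {y : V} (hh : h ≠ 0)
    (hv : viable G t s0 h j F y) : sig t s0 j ≤ (pool G t s0 h j F y).card := by
  rcases hv with h0 | h0
  · exact absurd h0 hh
  · exact h0

lemma not_mem_killer {h j : ℕ} {F : Finset V} {y x : V}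
    (hx : x ∉ killer G t s0 (h+1) j F y) :
    x ∉ ndom G t (pool G t s0 (h+1) j F y) ∧
      4*t*(((pool G t s0 (h+1) j F y).filter
        (fun w => x ∈ killer G t s0 h j (insert y F) w)).card) ≤
      (pool G t s0 (h+1) j F y).card := by
  classical
  rw [killer, Finset.mem_filter] at hx
  push_neg at hx
  exact hx (Finset.mem_univ x)


lemma arith_core (t p c k s σ : ℕ) (ht : 1 ≤ t) (h1 : c ≤ s + k)
    (h2 : p ≤ 2*t*c) (h3 : 4*t*k ≤ p) (h4 : 4*t*σ ≤ p) : σ ≤ s := by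
  have a3 : 2*p ≤ 4*t*c := by
    calc 2*p ≤ 2*(2*t*c) := by omega
      _ = 4*t*c := by ring
  have a4 : 4*t*c ≤ 4*t*s + 4*t*k := by
    calc 4*t*c ≤ 4*t*(s+k) := Nat.mul_le_mul_left _ h1
      _ = 4*t*s + 4*t*k := by ring
  have key : 4*t*σ ≤ 4*t*s := by omega
  exact Nat.le_of_mul_le_mul_left key (by omega)

/-- Degradation -/
lemma viable_degrade (ht : 1 ≤ t) :
    ∀ (h j : ℕ) (F : Finset V) (y x : V), viable G t s0 h (j+1) F y →
      x ∉ killer G t s0 h (j+1) F y → viable G t s0 h j (insert x F) y := by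
  intro h
  induction h with
  | zero => intro j F y x _ _; exact viable_zero G t s0 j _ y
  | succ h ih =>
    intro j F y x hv hx
    classical
    have hPcard : sig t s0 (j+1) ≤ (pool G t s0 (h+1) (j+1) F y).card :=
      viable_card G t s0 (by omega) hv
    obtain ⟨hnd, hload⟩ := not_mem_killer G t s0 hx
    have hnd' : (pool G t s0 (h+1) (j+1) F y).card ≤
        2*t*(((pool G t s0 (h+1) (j+1) F y) \ cnbr G x).card) := by
      rw [ndom, Finset.mem_filter] at hnd
      push_neg at hnd
      exact hnd (Finset.mem_univ x)
    have hScard : sig t s0 j ≤ ((((pool G t s0 (h+1) (j+1) F y) \ cnbr G x) \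
        ((pool G t s0 (h+1) (j+1) F y).filter
          (fun w => x ∈ killer G t s0 h (j+1) (insert y F) w))).card) := by
      apply arith_core t (pool G t s0 (h+1) (j+1) F y).card
        ((pool G t s0 (h+1) (j+1) F y) \ cnbr G x).card
        ((pool G t s0 (h+1) (j+1) F y).filter
          (fun w => x ∈ killer G t s0 h (j+1) (insert y F) w)).card _ (sig t s0 j) ht
      · have h1 := le_card_sdiff ((pool G t s0 (h+1) (j+1) F y).filter
          (fun w => x ∈ killer G t s0 h (j+1) (insert y F) w))
          ((pool G t s0 (h+1) (j+1) F y) \ cnbr G x)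
        omega
      · exact hnd'
      · exact hload
      · have h5 : sig t s0 (j+1) = 4*t*(sig t s0 j) := by
          rw [sig, sig, pow_succ]; ring
        omega
    refine Or.inr ?_
    have hsub : (((pool G t s0 (h+1) (j+1) F y) \ cnbr G x) \
        ((pool G t s0 (h+1) (j+1) F y).filter
          (fun w => x ∈ killer G t s0 h (j+1) (insert y F) w))) ⊆
        pool G t s0 (h+1) j (insert x F) y := by
      intro w hw
      rw [Finset.mem_sdiff, Finset.mem_sdiff] at hw
      obtain ⟨⟨hwP, hwcn⟩, hwL⟩ := hw
      obtain ⟨hwn, hwcl, hwv⟩ := (mem_pool_succ G t s0).1 hwP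
      rw [mem_pool_succ]
      refine ⟨hwn, ?_, ?_⟩
      · intro hmem
        rw [cl, Finset.mem_biUnion] at hmem
        obtain ⟨f, hf, hwf⟩ := hmem
        rcases Finset.mem_insert.1 hf with rfl | hf'
        · exact hwcn hwf
        · exact hwcl (Finset.mem_biUnion.2 ⟨f, hf', hwf⟩)
      · have hwk' : x ∉ killer G t s0 h (j+1) (insert y F) w := by
          intro hc
          exact hwL (Finset.mem_filter.2 ⟨hwP, hc⟩)
        have := ih (j) (insert y F) w x hwv hwk'
        rwa [Finset.insert_comm] at this
    calc sig t s0 j ≤ _ := hScard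
      _ ≤ _ := Finset.card_le_card hsub

/-- budget monotonicity -/
lemma viable_mono_budget (ht : 1 ≤ t) : ∀ (h j : ℕ) (F : Finset V) (y : V),
    viable G t s0 h (j+1) F y → viable G t s0 h j F y := by
  intro h
  induction h with
  | zero => intro j F y _; exact viable_zero G t s0 j F y
  | succ h ih =>
    intro j F y hv
    refine Or.inr ?_
    have h0 := viable_card G t s0 (by omega) hv
    have hsub : pool G t s0 (h+1) (j+1) F y ⊆ pool G t s0 (h+1) j F y := by
      intro w hw
      rw [mem_pool_succ] at hw ⊢
      exact ⟨hw.1, hw.2.1, ih j (insert y F) w hw.2.2⟩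
    have hsig : sig t s0 j ≤ sig t s0 (j+1) := by
      rw [sig, sig]
      exact Nat.mul_le_mul_left _ (Nat.pow_le_pow_right (by omega) (by omega))
    calc sig t s0 j ≤ sig t s0 (j+1) := hsig
      _ ≤ (pool G t s0 (h+1) (j+1) F y).card := h0
      _ ≤ _ := Finset.card_le_card hsub

/-- height monotonicity -/
lemma viable_mono_height : ∀ (h j : ℕ) (F : Finset V) (y : V),
    viable G t s0 (h+1) j F y → viable G t s0 h j F y := by
  intro h
  induction h with
  | zero => intro j F y _; exact viable_zero G t s0 j F y
  | succ h ih =>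
    intro j F y hv
    refine Or.inr ?_
    have h0 := viable_card G t s0 (by omega) hv
    have hsub : pool G t s0 (h+1+1) j F y ⊆ pool G t s0 (h+1) j F y := by
      intro w hw
      rw [mem_pool_succ] at hw ⊢
      exact ⟨hw.1, hw.2.1, ih j (insert y F) w hw.2.2⟩
    calc sig t s0 j ≤ (pool G t s0 (h+1+1) j F y).card := h0
      _ ≤ _ := Finset.card_le_card hsub

lemma viable_mono_height' : ∀ (h h' j : ℕ), h' ≤ h → ∀ (F : Finset V) (y : V),
    viable G t s0 h j F y → viable G t s0 h' j F y := by
  intro h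
  induction h with
  | zero =>
    intro h' j hh F y hv
    obtain rfl : h' = 0 := Nat.le_zero.mp hh
    exact hv
  | succ h ih =>
    intro h' j hh F y hv
    rcases Nat.eq_or_lt_of_le hh with rfl | hlt
    · exact hv
    · exact ih h' j (by omega) F y (viable_mono_height G t s0 h j F y hv)

end core

section core2
variable {V : Type*} [Fintype V] [DecidableEq V] (G : SimpleGraph V) (t s0 : ℕ)

-- kb: recursive killer bound
def kb (t : ℕ) : ℕ → ℕ
  | 0 => 0
  | h+1 => (t-1) + 4*t*(kb t h)

lemma kb_le_pow (t : ℕ) (ht : 1 ≤ t) : ∀ h, kb t h ≤ (8*t)^h := by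
  intro h
  induction h with
  | zero => simp [kb]
  | succ h ih =>
    rw [kb]
    have h1 : 4*t*(kb t h) ≤ 4*t*(8*t)^h := Nat.mul_le_mul_left _ ih
    have h2 : 1 ≤ (8*t)^h := Nat.one_le_pow _ _ (by omega)
    have h3 : (t-1) ≤ 4*t*(8*t)^h := by
      have : 4*t*1 ≤ 4*t*(8*t)^h := Nat.mul_le_mul_left _ h2
      omega
    calc (t-1) + 4*t*(kb t h) ≤ 4*t*(8*t)^h + 4*t*(8*t)^h := by omega
      _ = 8*t*(8*t)^h := by ring
      _ = (8*t)^(h+1) := by rw [pow_succ]; ring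

/-- The killer set of a viable vertex is small. -/
lemma killer_card_le (hK : ¬ ContainsSub (Kpart 2 t) G) (ht : 1 ≤ t)
    (hs0 : 4*t+2 ≤ s0) :
    ∀ (h j : ℕ) (F : Finset V) (y : V), viable G t s0 h j F y →
      (killer G t s0 h j F y).card ≤ kb t h := by
  intro h
  induction h with
  | zero => intro j F y _; simp [killer, kb]
  | succ h ih =>
    intro j F y hv
    classical
    have hPcard : sig t s0 j ≤ (pool G t s0 (h+1) j F y).card :=
      viable_card G t s0 (by omega) hv
    have hs : 4*t+2 ≤ (pool G t s0 (h+1) j F y).card := by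
      have : s0 ≤ sig t s0 j := by
        have : 1 ≤ (4*t)^j := Nat.one_le_pow _ _ (by omega)
        calc s0 = s0 * 1 := by ring
          _ ≤ s0 * (4*t)^j := Nat.mul_le_mul_left _ this
      omega
    rw [killer]
    have hsplit : (Finset.univ.filter (fun x =>
        x ∈ ndom G t (pool G t s0 (h+1) j F y) ∨
        (pool G t s0 (h+1) j F y).card <
          4*t*(((pool G t s0 (h+1) j F y).filter
            (fun w => x ∈ killer G t s0 h j (insert y F) w)).card))) ⊆
        (ndom G t (pool G t s0 (h+1) j F y)) ∪
        (Finset.univ.filter (fun x => (pool G t s0 (h+1) j F y).card <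
          4*t*(((pool G t s0 (h+1) j F y).filter
            (fun w => x ∈ killer G t s0 h j (insert y F) w)).card))) := by
      intro x hx
      rw [Finset.mem_filter] at hx
      rcases hx.2 with h1 | h1
      · exact Finset.mem_union_left _ h1
      · exact Finset.mem_union_right _ (Finset.mem_filter.2 ⟨Finset.mem_univ x, h1⟩)
    have hcard1 : (ndom G t (pool G t s0 (h+1) j F y)).card ≤ t - 1 :=
      ndom_card_le G hK ht _ hs
    -- the loaded set
    set P := pool G t s0 (h+1) j F y with hPdef
    have hcard2 : (Finset.univ.filter (fun x => P.card <
        4*t*((P.filter (fun w => x ∈ killer G t s0 h j (insert y F) w)).card))).card ≤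
        4*t*(kb t h) := by
      set T := Finset.univ.filter (fun x => P.card <
        4*t*((P.filter (fun w => x ∈ killer G t s0 h j (insert y F) w)).card)) with hT
      -- double count
      have hdc : ∑ x ∈ T, (P.filter (fun w => x ∈ killer G t s0 h j (insert y F) w)).card ≤
          ∑ w ∈ P, (killer G t s0 h j (insert y F) w).card := by
        have e1 : ∀ x ∈ T, (P.filter (fun w => x ∈ killer G t s0 h j (insert y F) w)).card =
            ∑ w ∈ P, (if x ∈ killer G t s0 h j (insert y F) w then 1 else 0) := by
          intro x _
          rw [Finset.card_filter]
        rw [Finset.sum_congr rfl e1, Finset.sum_comm]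
        apply Finset.sum_le_sum
        intro w _
        calc ∑ x ∈ T, (if x ∈ killer G t s0 h j (insert y F) w then 1 else 0)
            = (T.filter (fun x => x ∈ killer G t s0 h j (insert y F) w)).card := by
              rw [Finset.card_filter]
          _ ≤ (killer G t s0 h j (insert y F) w).card := by
              apply Finset.card_le_card
              intro x hx
              exact (Finset.mem_filter.1 hx).2
      have hwv : ∀ w ∈ P, (killer G t s0 h j (insert y F) w).card ≤ kb t h := by
        intro w hw
        have := ((mem_pool_succ G t s0).1 (hPdef ▸ hw)).2.2
        exact ih j (insert y F) w this
      have hsum2 : ∑ w ∈ P, (killer G t s0 h j (insert y F) w).card ≤ P.card * kb t h := by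
        calc ∑ w ∈ P, (killer G t s0 h j (insert y F) w).card ≤ ∑ _w ∈ P, kb t h :=
              Finset.sum_le_sum hwv
          _ = P.card * kb t h := by rw [Finset.sum_const, smul_eq_mul]
      -- each x ∈ T contributes > P.card/(4t)
      have hTbound : T.card * P.card < 4*t*(P.card * kb t h) + P.card := by
        by_cases hTe : T.card = 0
        · rw [hTe, Nat.zero_mul]
          omega
        · have h1 : ∀ x ∈ T, P.card + 1 ≤ 4*t*((P.filter
              (fun w => x ∈ killer G t s0 h j (insert y F) w)).card) := by
            intro x hx
            have := (Finset.mem_filter.1 (hT ▸ hx)).2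
            omega
          have h2 : T.card * (P.card + 1) ≤ ∑ x ∈ T, 4*t*((P.filter
              (fun w => x ∈ killer G t s0 h j (insert y F) w)).card) := by
            calc T.card * (P.card + 1) = ∑ _x ∈ T, (P.card + 1) := by
                  rw [Finset.sum_const, smul_eq_mul]
              _ ≤ _ := Finset.sum_le_sum h1
          rw [← Finset.mul_sum] at h2
          have h3 : 4*t*(∑ x ∈ T, (P.filter
              (fun w => x ∈ killer G t s0 h j (insert y F) w)).card) ≤
              4*t*(P.card * kb t h) := Nat.mul_le_mul_left _ (le_trans hdc hsum2)
          nlinarith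
      -- conclude T.card ≤ 4t·kb
      by_contra hc
      push_neg at hc
      have : (4*t*(kb t h) + 1) * P.card ≤ T.card * P.card :=
        Nat.mul_le_mul_right _ (by omega)
      nlinarith [hPcard, hs]
    calc (Finset.univ.filter _).card ≤ _ := Finset.card_le_card hsplit
      _ ≤ _ + _ := Finset.card_union_le _ _
      _ ≤ (t-1) + 4*t*(kb t h) := Nat.add_le_add hcard1 hcard2
      _ = kb t (h+1) := by rw [kb]

lemma killer_card_le_pow (hK : ¬ ContainsSub (Kpart 2 t) G) (ht : 1 ≤ t)
    (hs0 : 4*t+2 ≤ s0) (h j : ℕ) (F : Finset V) (y : V) (hv : viable G t s0 h j F y) :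
    (killer G t s0 h j F y).card ≤ (8*t)^h :=
  le_trans (killer_card_le G t s0 hK ht hs0 h j F y hv) (kb_le_pow t ht h)

lemma sum_card_filter_swap (A : Finset V) (R : V → V → Prop) [∀ y w, Decidable (R y w)] :
    ∑ y ∈ (Finset.univ : Finset V), (A.filter (fun w => R y w)).card
      = ∑ w ∈ A, ((Finset.univ : Finset V).filter (fun y => R y w)).card := by
  have e1 : ∀ y, (A.filter (fun w => R y w)).card = ∑ w ∈ A, (if R y w then 1 else 0) := by
    intro y; rw [Finset.card_filter]
  have e2 : ∀ w, ((Finset.univ : Finset V).filter (fun y => R y w)).card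
      = ∑ y ∈ (Finset.univ : Finset V), (if R y w then 1 else 0) := by
    intro w; rw [Finset.card_filter]
  simp only [e1, e2]
  exact Finset.sum_comm

open scoped Classical in
/-- Existence of a viable vertex in a min-degree-`D` graph. -/
lemma exists_viable (hK : ¬ ContainsSub (Kpart 2 t) G) (ht : 1 ≤ t)
    (hs0 : 4*t+2 ≤ s0) (n η D : ℕ)
    (hdeg : ∀ v : V, D ≤ (nbr G v).card)
    (hD : η*(sig t s0 (n+1+η) + (8*t)^η) < D)
    (hV : Nonempty V) :
    ∃ y : V, viable G t s0 η (n+1) ∅ y := by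
  classical
  set Q : ℕ := sig t s0 (n+1+η) + (8*t)^η with hQ
  have main : ∀ h, h ≤ η →
      ∑ y ∈ (Finset.univ.filter (fun y => ¬ viable G t s0 h (n+1+(η-h)) ∅ y)),
        (nbr G y).card ≤ h * Q * Fintype.card V := by
    intro h
    induction h with
    | zero =>
      intro _
      have : (Finset.univ.filter (fun y => ¬ viable G t s0 0 (n+1+(η-0)) ∅ y)) = ∅ := by
        apply Finset.filter_false_of_mem
        intro y _
        simp only [not_not]
        exact Or.inl rfl
      rw [this]
      simp
    | succ h ih =>
      intro hhη
      have ihh := ih (by omega)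
      set NV : Finset V := Finset.univ.filter
        (fun y => ¬ viable G t s0 h (n+1+(η-h)) ∅ y) with hNV
      set NV1 : Finset V := Finset.univ.filter
        (fun y => ¬ viable G t s0 (h+1) (n+1+(η-(h+1))) ∅ y) with hNV1
      have hbud : n+1+(η-h) = (n+1+(η-(h+1))) + 1 := by omega
      -- pointwise decomposition
      have hdecomp : ∀ y ∈ NV1, (nbr G y).card ≤ sig t s0 (n+1+η) +
          ((nbr G y ∩ NV).card +
           ((Finset.univ.filter (fun w => w ∉ NV ∧ y ∈ killer G t s0 h (n+1+(η-h)) ∅ w)).card) ) := by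
        intro y hy
        have hsub : nbr G y ⊆ pool G t s0 (h+1) (n+1+(η-(h+1))) ∅ y ∪
            ((nbr G y ∩ NV) ∪
             (Finset.univ.filter (fun w => w ∉ NV ∧ y ∈ killer G t s0 h (n+1+(η-h)) ∅ w))) := by
          intro w hw
          by_cases hwNV : w ∈ NV
          · exact Finset.mem_union_right _ (Finset.mem_union_left _
              (Finset.mem_inter.2 ⟨hw, hwNV⟩))
          by_cases hk : y ∈ killer G t s0 h (n+1+(η-h)) ∅ w
          · exact Finset.mem_union_right _ (Finset.mem_union_right _
              (Finset.mem_filter.2 ⟨Finset.mem_univ w, hwNV, hk⟩))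
          · apply Finset.mem_union_left
            have hwv : viable G t s0 h (n+1+(η-h)) ∅ w := by
              rw [hNV] at hwNV
              simp only [Finset.mem_filter, Finset.mem_univ, true_and, not_not] at hwNV
              exact hwNV
            rw [hbud] at hwv
            have := viable_degrade G t s0 ht h (n+1+(η-(h+1))) ∅ w y hwv (by rw [← hbud]; exact hk)
            rw [mem_pool_succ]
            refine ⟨hw, ?_, this⟩
            rw [cl_empty]
            exact Finset.notMem_empty w
        have hpool : (pool G t s0 (h+1) (n+1+(η-(h+1))) ∅ y).card < sig t s0 (n+1+η) := by
          have hy' : ¬ viable G t s0 (h+1) (n+1+(η-(h+1))) ∅ y := by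
            rw [hNV1] at hy
            simpa using hy
          rw [viable] at hy'
          push_neg at hy'
          have h1 := hy'.2
          have h2 : sig t s0 (n+1+(η-(h+1))) ≤ sig t s0 (n+1+η) := by
            rw [sig, sig]
            exact Nat.mul_le_mul_left _ (Nat.pow_le_pow_right (by omega) (by omega))
          omega
        calc (nbr G y).card ≤ _ := Finset.card_le_card hsub
          _ ≤ (pool G t s0 (h+1) (n+1+(η-(h+1))) ∅ y).card +
              ((nbr G y ∩ NV) ∪ _).card := Finset.card_union_le _ _
          _ ≤ (pool G t s0 (h+1) (n+1+(η-(h+1))) ∅ y).card +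
              ((nbr G y ∩ NV).card + _) := by
                exact Nat.add_le_add_left (Finset.card_union_le _ _) _
          _ ≤ sig t s0 (n+1+η) + ((nbr G y ∩ NV).card + _) := by
                exact Nat.add_le_add_right (le_of_lt hpool) _
      -- sum the three parts
      have hsum : ∑ y ∈ NV1, (nbr G y).card ≤
          Fintype.card V * (sig t s0 (n+1+η)) +
          (∑ w ∈ NV, (nbr G w).card + Fintype.card V * (8*t)^η) := by
        have s1 : ∑ y ∈ NV1, (nbr G y).card ≤
            ∑ y ∈ NV1, (sig t s0 (n+1+η) + ((nbr G y ∩ NV).card +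
              ((Finset.univ.filter (fun w => w ∉ NV ∧ y ∈ killer G t s0 h (n+1+(η-h)) ∅ w)).card))) :=
          Finset.sum_le_sum hdecomp
        have s2 : ∑ y ∈ NV1, (sig t s0 (n+1+η) + ((nbr G y ∩ NV).card +
              ((Finset.univ.filter (fun w => w ∉ NV ∧ y ∈ killer G t s0 h (n+1+(η-h)) ∅ w)).card)))
            = NV1.card * (sig t s0 (n+1+η)) + (∑ y ∈ NV1, (nbr G y ∩ NV).card +
              ∑ y ∈ NV1, ((Finset.univ.filter (fun w => w ∉ NV ∧ y ∈ killer G t s0 h (n+1+(η-h)) ∅ w)).card)) := by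
          rw [Finset.sum_add_distrib, Finset.sum_add_distrib, Finset.sum_const, smul_eq_mul]
        -- part 2 bound
        have s3 : ∑ y ∈ NV1, (nbr G y ∩ NV).card ≤ ∑ w ∈ NV, (nbr G w).card := by
          have e0 : ∀ y, (nbr G y ∩ NV).card = (NV.filter (fun w => w ∈ nbr G y)).card := by
            intro y
            congr 1
            ext w
            simp [Finset.mem_inter, Finset.mem_filter, and_comm]
          calc ∑ y ∈ NV1, (nbr G y ∩ NV).card
              ≤ ∑ y ∈ (Finset.univ : Finset V), (nbr G y ∩ NV).card :=
                Finset.sum_le_sum_of_subset (Finset.filter_subset _ _)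
            _ = ∑ y ∈ (Finset.univ : Finset V), (NV.filter (fun w => w ∈ nbr G y)).card := by
                simp only [e0]
            _ = ∑ w ∈ NV, ((Finset.univ : Finset V).filter (fun y => w ∈ nbr G y)).card :=
                sum_card_filter_swap NV (fun y w => w ∈ nbr G y)
            _ = ∑ w ∈ NV, (nbr G w).card := by
                apply Finset.sum_congr rfl
                intro w _
                congr 1
                ext y
                simp only [Finset.mem_filter, Finset.mem_univ, true_and, nbr]
                exact ⟨fun h => h.symm, fun h => h.symm⟩
        -- part 3 bound
        have s4 : ∑ y ∈ NV1, ((Finset.univ.filter (fun w => w ∉ NV ∧ y ∈ killer G t s0 h (n+1+(η-h)) ∅ w)).card)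
            ≤ Fintype.card V * (8*t)^η := by
          calc ∑ y ∈ NV1, ((Finset.univ.filter (fun w => w ∉ NV ∧ y ∈ killer G t s0 h (n+1+(η-h)) ∅ w)).card)
              ≤ ∑ y ∈ (Finset.univ : Finset V), (((Finset.univ.filter (fun w => w ∉ NV)).filter
                  (fun w => y ∈ killer G t s0 h (n+1+(η-h)) ∅ w)).card) := by
                apply le_trans (Finset.sum_le_sum_of_subset (Finset.filter_subset _ _))
                apply Finset.sum_le_sum
                intro y _
                apply Finset.card_le_card
                intro w hw
                simp only [Finset.mem_filter, Finset.mem_univ, true_and] at hw ⊢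
                exact ⟨hw.1, hw.2⟩
            _ = ∑ w ∈ (Finset.univ.filter (fun w => w ∉ NV)),
                  ((Finset.univ : Finset V).filter
                    (fun y => y ∈ killer G t s0 h (n+1+(η-h)) ∅ w)).card :=
                sum_card_filter_swap (Finset.univ.filter (fun w => w ∉ NV)) (fun y w => y ∈ killer G t s0 h (n+1+(η-h)) ∅ w)
            _ ≤ ∑ w ∈ (Finset.univ.filter (fun w => w ∉ NV)), (8*t)^h := by
                apply Finset.sum_le_sum
                intro w hw
                have hwv : viable G t s0 h (n+1+(η-h)) ∅ w := by
                  simp only [Finset.mem_filter, Finset.mem_univ, true_and, hNV, not_not] at hw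
                  exact hw
                calc ((Finset.univ : Finset V).filter
                      (fun y => y ∈ killer G t s0 h (n+1+(η-h)) ∅ w)).card
                    ≤ (killer G t s0 h (n+1+(η-h)) ∅ w).card := by
                      apply Finset.card_le_card
                      intro y hy
                      exact (Finset.mem_filter.1 hy).2
                  _ ≤ (8*t)^h := killer_card_le_pow G t s0 hK ht hs0 h _ ∅ w hwv
            _ ≤ Fintype.card V * (8*t)^h := by
                rw [Finset.sum_const, smul_eq_mul]
                apply Nat.mul_le_mul_right
                apply le_trans (Finset.card_le_card (Finset.filter_subset _ _))
                simp
            _ ≤ Fintype.card V * (8*t)^η := by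
                apply Nat.mul_le_mul_left
                exact Nat.pow_le_pow_right (by omega) (by omega)
        have s5 : NV1.card * (sig t s0 (n+1+η)) ≤ Fintype.card V * (sig t s0 (n+1+η)) := by
          apply Nat.mul_le_mul_right
          apply le_trans (Finset.card_le_card (Finset.filter_subset _ _))
          simp
        omega
      have hQsplit : Fintype.card V * (sig t s0 (n+1+η)) + Fintype.card V * (8*t)^η
          = Q * Fintype.card V := by
        rw [hQ]; ring
      calc ∑ y ∈ NV1, (nbr G y).card
          ≤ Fintype.card V * (sig t s0 (n+1+η)) +
            (∑ w ∈ NV, (nbr G w).card + Fintype.card V * (8*t)^η) := hsum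
        _ ≤ Fintype.card V * (sig t s0 (n+1+η)) +
            (h * Q * Fintype.card V + Fintype.card V * (8*t)^η) := by omega
        _ = Q * Fintype.card V + h * Q * Fintype.card V := by omega
        _ = (h+1) * Q * Fintype.card V := by ring
  -- conclude
  by_contra hc
  push_neg at hc
  have hNVfull : (Finset.univ.filter (fun y => ¬ viable G t s0 η (n+1+(η-η)) ∅ y))
      = (Finset.univ : Finset V) := by
    apply Finset.filter_true_of_mem
    intro y _
    have : η - η = 0 := by omega
    rw [this]
    exact hc y
  have h1 := main η (le_refl η)
  rw [hNVfull] at h1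
  have h2 : Fintype.card V * D ≤ ∑ y ∈ (Finset.univ : Finset V), (nbr G y).card := by
    calc Fintype.card V * D = ∑ _y ∈ (Finset.univ : Finset V), D := by
          rw [Finset.sum_const, smul_eq_mul, Finset.card_univ]
      _ ≤ _ := Finset.sum_le_sum (fun y _ => hdeg y)
  have h3 : 1 ≤ Fintype.card V := Fintype.card_pos_iff.2 hV
  have h5 : Fintype.card V * D ≤ Fintype.card V * (η * Q) := by
    calc Fintype.card V * D ≤ ∑ y ∈ (Finset.univ : Finset V), (nbr G y).card := h2
      _ ≤ η * Q * Fintype.card V := h1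
      _ = Fintype.card V * (η * Q) := by ring
  have h6 : D ≤ η * Q := Nat.le_of_mul_le_mul_left h5 (by omega)
  omega
end core2

section tree
variable {W : Type*} [DecidableEq W] {H : SimpleGraph W} {r : W}

lemma geo_support_dist_lt (hH : H.IsTree) {a x : W} (p : H.Walk r a)
    (hp : p.length = H.dist r a) (hx : x ∈ p.support) (hxa : x ≠ a) :
    H.dist r x < H.dist r a := by
  have h1 : H.dist r x ≤ (p.takeUntil x hx).length := SimpleGraph.dist_le _
  have h2 : (p.takeUntil x hx).length + (p.dropUntil x hx).length = p.length := by
    rw [← SimpleGraph.Walk.length_append, SimpleGraph.Walk.take_spec]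
  have h3 : (p.dropUntil x hx).length ≠ 0 := by
    intro h0
    exact hxa (SimpleGraph.Walk.eq_of_length_eq_zero h0)
  omega

lemma tree_dist_path (hH : H.IsTree) (r a : W) :
    ∃ p : H.Walk r a, p.IsPath ∧ p.length = H.dist r a :=
  hH.isConnected.exists_path_of_dist r a

lemma tree_adj_dist_aux (hH : H.IsTree) {a b : W} (hab : H.Adj a b)
    (hle : H.dist r a ≤ H.dist r b) : H.dist r b = H.dist r a + 1 := by
  have hconn := hH.isConnected
  have htri : H.dist r b ≤ H.dist r a + 1 := by
    have := hconn.dist_triangle (u := r) (v := a) (w := b)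
    have hone : H.dist a b = 1 := (SimpleGraph.dist_eq_one_iff_adj).2 hab
    omega
  rcases Nat.lt_or_ge (H.dist r a) (H.dist r b) with hlt | hge
  · omega
  · exfalso
    obtain ⟨p, hpath, hlen⟩ := tree_dist_path hH r a
    have hbns : b ∉ p.support := by
      intro hb
      have hba : b ≠ a := fun h => (H.ne_of_adj hab) h.symm
      have := geo_support_dist_lt hH p hlen hb hba
      omega
    have hq : (p.concat hab).IsPath := by
      rw [SimpleGraph.Walk.isPath_def, SimpleGraph.Walk.support_concat]
      refine List.Nodup.append ((SimpleGraph.Walk.isPath_def p).1 hpath) (by simp) ?_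
      intro x hxp hxb
      simp only [List.mem_singleton] at hxb
      subst hxb
      exact hbns hxp
    obtain ⟨pb, hpb, hlenb⟩ := tree_dist_path hH r b
    obtain ⟨pu, _, hpu⟩ := hH.existsUnique_path r b
    have e1 := hpu _ hq
    have e2 := hpu _ hpb
    have : (p.concat hab).length = pb.length := by rw [e1, e2]
    rw [SimpleGraph.Walk.length_concat, hlen, hlenb] at this
    omega

lemma tree_adj_dist (hH : H.IsTree) {a b : W} (hab : H.Adj a b) :
    H.dist r b = H.dist r a + 1 ∨ H.dist r a = H.dist r b + 1 := by
  rcases le_total (H.dist r a) (H.dist r b) with h | h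
  · exact Or.inl (tree_adj_dist_aux hH hab h)
  · exact Or.inr (tree_adj_dist_aux hH hab.symm h)

lemma tree_parent_exists (hH : H.IsTree) {w : W} (hw : w ≠ r) :
    ∃ x : W, H.Adj w x ∧ H.dist r x + 1 = H.dist r w := by
  obtain ⟨p, hpath, hlen⟩ := tree_dist_path hH r w
  obtain ⟨x, hadj, q, hq⟩ := SimpleGraph.Walk.exists_eq_cons_of_ne hw p.reverse
  refine ⟨x, hadj, ?_⟩
  have hlq : q.length + 1 = H.dist r w := by
    have := congrArg SimpleGraph.Walk.length hq
    rw [SimpleGraph.Walk.length_reverse, SimpleGraph.Walk.length_cons] at this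
    omega
  have h1 : H.dist r x ≤ q.length := by
    have := SimpleGraph.dist_le q.reverse
    rwa [SimpleGraph.Walk.length_reverse] at this
  have h2 : H.dist r w ≤ H.dist r x + 1 := by
    have htri := hH.isConnected.dist_triangle (u := r) (v := x) (w := w)
    have hone : H.dist x w = 1 := (SimpleGraph.dist_eq_one_iff_adj).2 hadj.symm
    omega
  omega

lemma tree_parent_unique (hH : H.IsTree) {w x₁ x₂ : W}
    (h1 : H.Adj w x₁) (h2 : H.Adj w x₂)
    (hd1 : H.dist r x₁ + 1 = H.dist r w) (hd2 : H.dist r x₂ + 1 = H.dist r w) :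
    x₁ = x₂ := by
  by_contra hne
  obtain ⟨q₁, hq₁, hl₁⟩ := tree_dist_path hH r x₁
  obtain ⟨q₂, hq₂, hl₂⟩ := tree_dist_path hH r x₂
  have hP₁ : (SimpleGraph.Walk.cons h1.symm
      (SimpleGraph.Walk.cons h2 (SimpleGraph.Walk.nil))).IsPath := by
    rw [SimpleGraph.Walk.isPath_def]
    simp only [SimpleGraph.Walk.support_cons, SimpleGraph.Walk.support_nil]
    refine List.nodup_cons.2 ⟨?_, List.nodup_cons.2 ⟨?_, List.nodup_singleton _⟩⟩
    · intro hx
      simp only [List.mem_cons, List.mem_singleton, List.not_mem_nil, or_false] at hx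
      rcases hx with h | h
      · exact (H.ne_of_adj h1) h.symm
      · exact hne h
    · intro hx
      simp only [List.mem_cons, List.not_mem_nil, or_false] at hx
      exact (H.ne_of_adj h2) hx
  have hwns : w ∉ (q₁.reverse.append q₂).support := by
    intro hz
    rw [SimpleGraph.Walk.mem_support_append_iff] at hz
    rcases hz with hz | hz
    · rw [SimpleGraph.Walk.support_reverse, List.mem_reverse] at hz
      by_cases hwx : w = x₁
      · exact (H.ne_of_adj h1) hwx
      · have := geo_support_dist_lt hH q₁ hl₁ hz hwx
        omega
    · by_cases hwx : w = x₂
      · exact (H.ne_of_adj h2) hwx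
      · have := geo_support_dist_lt hH q₂ hl₂ hz hwx
        omega
  have hP₂ : ((q₁.reverse.append q₂).bypass).IsPath := SimpleGraph.Walk.bypass_isPath _
  obtain ⟨pu, _, hpu⟩ := hH.existsUnique_path x₁ x₂
  have e1 := hpu _ hP₁
  have e2 := hpu _ hP₂
  have hmem : w ∈ (SimpleGraph.Walk.cons h1.symm
      (SimpleGraph.Walk.cons h2 (SimpleGraph.Walk.nil))).support := by
    simp [SimpleGraph.Walk.support_cons]
  rw [e1, ← e2] at hmem
  exact hwns (SimpleGraph.Walk.support_bypass_subset _ hmem)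

lemma tree_dist_zero_iff (hH : H.IsTree) {w : W} : H.dist r w = 0 ↔ w = r := by
  rw [hH.isConnected.dist_eq_zero_iff]
  exact eq_comm

end tree

/-- sorted enumeration of the tree -/
lemma exists_sorted_equiv {W : Type*} [Fintype W] [DecidableEq W] (H : SimpleGraph W)
    (hH : H.IsTree) (r : W) (n : ℕ) (hn : n = Fintype.card W) (h0n : 0 < n) :
    ∃ e : Fin n ≃ W, Monotone (fun k : Fin n => H.dist r (e k)) ∧ e ⟨0, h0n⟩ = r := by
  classical
  have e₁ : Fin n ≃ W := (Fintype.equivFinOfCardEq hn.symm).symm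
  set f : Fin n → ℕ := fun k => H.dist r (e₁ k) with hf
  set σ : Equiv.Perm (Fin n) := Tuple.sort f with hσ
  refine ⟨σ.trans e₁, ?_, ?_⟩
  · have hm := Tuple.monotone_sort f
    intro a b hab
    exact hm hab
  · have hm := Tuple.monotone_sort f
    have hle : ∀ k : Fin n, H.dist r ((σ.trans e₁) ⟨0, h0n⟩) ≤ H.dist r ((σ.trans e₁) k) := by
      intro k
      have h0k : (⟨0, h0n⟩ : Fin n) ≤ k := by
        rw [Fin.le_def]
        exact Nat.zero_le _
      exact hm h0k
    have hz : H.dist r ((σ.trans e₁) ⟨0, h0n⟩) = 0 := by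
      have := hle ((σ.trans e₁).symm r)
      rw [Equiv.apply_symm_apply] at this
      have hrr : H.dist r r = 0 := SimpleGraph.dist_self
      omega
    exact (tree_dist_zero_iff hH).1 hz

section core3
variable {V : Type*} [Fintype V] [DecidableEq V] (G : SimpleGraph V) (t s0 : ℕ)

open scoped Classical in
/-- The main embedding construction. -/
lemma embed_main {W : Type*} [Fintype W] [DecidableEq W] (H : SimpleGraph W)
    (hH : H.IsTree) (r : W) (η : ℕ) (hheight : ∀ w : W, H.dist r w ≤ η)
    (hK : ¬ ContainsSub (Kpart 2 t) G) (ht : 1 ≤ t)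
    (hs0 : 4*t+2 ≤ s0) (n : ℕ) (hn : n = Fintype.card W) (hn1 : 1 ≤ n)
    (hs0' : n * (8*t)^η + 1 ≤ s0)
    (e : Fin n ≃ W) (hmono : Monotone (fun k : Fin n => H.dist r (e k)))
    (h0n : 0 < n) (he0 : e ⟨0, h0n⟩ = r)
    (ystar : V) (hystar : viable G t s0 η (n+1) ∅ ystar) :
    ∃ Φ : W → V, Function.Injective Φ ∧
      ∀ a b : W, H.Adj a b ↔ G.Adj (Φ a) (Φ b) := by
  classical
  -- the inductive construction
  have main : ∀ i : ℕ, 1 ≤ i → i ≤ n → ∃ φ : Fin n → V,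
      (∀ k l : Fin n, k.val < i → l.val < i → k ≠ l → φ k ≠ φ l) ∧
      (∀ k l : Fin n, k.val < i → l.val < i → (H.Adj (e k) (e l) ↔ G.Adj (φ k) (φ l))) ∧
      (∀ k : Fin n, k.val < i → viable G t s0 (η - H.dist r (e k)) (n + 2 - i)
        ((((Finset.univ.filter (fun l : Fin n => l.val < i)).image φ).erase (φ k)) ) (φ k)) := by
    intro i
    induction i with
    | zero => omega
    | succ i ih =>
      intro _ hin
      by_cases hi1 : i = 0
      · -- base case i+1 = 1
        subst hi1
        refine ⟨fun _ => ystar, ?_, ?_, ?_⟩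
        · intro k l hk hl hkl
          exfalso
          apply hkl
          apply Fin.ext
          have hkv : k.val = 0 := by omega
          have hlv : l.val = 0 := by omega
          rw [hkv, hlv]
        · intro k l hk hl
          have hk0 : k = ⟨0, h0n⟩ := by
            have hkv : k.val = 0 := by omega
            exact Fin.ext hkv
          have hl0 : l = ⟨0, h0n⟩ := by
            have hlv : l.val = 0 := by omega
            exact Fin.ext hlv
          rw [hk0, hl0]
          constructor
          · intro h; exact absurd h (H.irrefl)
          · intro h; exact absurd h (G.irrefl)
        · intro k hk
          have hk0 : k = ⟨0, h0n⟩ := by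
            have hkv : k.val = 0 := by omega
            exact Fin.ext hkv
          rw [hk0, he0]
          have hd0 : H.dist r r = 0 := (tree_dist_zero_iff hH).2 rfl
          rw [hd0]
          have himg : (((Finset.univ.filter (fun l : Fin n => l.val < 1)).image
              (fun _ : Fin n => ystar)).erase ystar) = ∅ := by
            have h1 : (Finset.univ.filter (fun l : Fin n => l.val < 1)).image
                (fun _ : Fin n => ystar) = {ystar} := by
              apply Finset.image_const
              exact ⟨⟨0, h0n⟩, by simp⟩
            rw [h1, Finset.erase_singleton]
          rw [himg]
          have : n + 2 - 1 = n + 1 := by omega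
          rw [this, Nat.sub_zero]
          exact hystar
      · -- inductive step: i ≥ 1
        have hi1' : 1 ≤ i := by omega
        obtain ⟨φ, hinj, hadj, hviab⟩ := ih hi1' (by omega)
        have hiln : i < n := by omega
        set ki : Fin n := ⟨i, hiln⟩ with hki
        set w : W := e ki with hwdef
        have hwr : w ≠ r := by
          intro hcon
          have : ki = ⟨0, h0n⟩ := e.injective (by rw [he0, ← hwdef]; exact hcon)
          have := congrArg Fin.val this
          simp [hki] at this
          omega
        have hdw1 : 1 ≤ H.dist r w := by
          rcases Nat.eq_zero_or_pos (H.dist r w) with h0 | h0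
          · exact absurd ((tree_dist_zero_iff hH).1 h0) hwr
          · exact h0
        obtain ⟨x, hadjwx, hdx⟩ := tree_parent_exists hH hwr
        set kp : Fin n := e.symm x with hkp
        have hekp : e kp = x := e.apply_symm_apply x
        have hkpi : kp.val < i := by
          by_contra hge
          push_neg at hge
          have : ki ≤ kp := by
            rw [Fin.le_def]
            have hkiv : ki.val = i := rfl
            omega
          have := hmono this
          simp only [hekp, ← hwdef] at this
          omega
        have hdwη : H.dist r w ≤ η := hheight w
        have hhp : η - H.dist r x = (η - H.dist r w) + 1 := by omega
        -- the parent's pool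
        have hvp := hviab kp hkpi
        rw [hekp, hhp] at hvp
        set Img : Finset V := (Finset.univ.filter (fun l : Fin n => l.val < i)).image φ
          with hImg
        set Fp : Finset V := Img.erase (φ kp) with hFp
        set P : Finset V := pool G t s0 ((η - H.dist r w) + 1) (n+2-i) Fp (φ kp) with hP
        have hPcard : sig t s0 (n+2-i) ≤ P.card := viable_card G t s0 (by omega) hvp
        have hPs0 : s0 ≤ P.card := by
          have : s0 ≤ sig t s0 (n+2-i) := by
            rw [sig]
            have : 1 ≤ (4*t)^(n+2-i) := Nat.one_le_pow _ _ (by omega)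
            calc s0 = s0 * 1 := by ring
              _ ≤ _ := Nat.mul_le_mul_left _ this
          omega
        -- exclusion set
        set X : Finset V := (Finset.univ.filter (fun k : Fin n => k.val < i)).biUnion
          (fun k => killer G t s0 (η - H.dist r (e k)) (n+2-i)
            ((Img.erase (φ k))) (φ k)) with hX
        have hXcard : X.card ≤ n * (8*t)^η := by
          calc X.card ≤ ∑ k ∈ (Finset.univ.filter (fun k : Fin n => k.val < i)),
              (killer G t s0 (η - H.dist r (e k)) (n+2-i) ((Img.erase (φ k))) (φ k)).card :=
              Finset.card_biUnion_le
            _ ≤ ∑ k ∈ (Finset.univ.filter (fun k : Fin n => k.val < i)), (8*t)^η := by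
              apply Finset.sum_le_sum
              intro k hk
              have hkv := hviab k (by simpa using (Finset.mem_filter.1 hk).2)
              calc (killer G t s0 (η - H.dist r (e k)) (n+2-i) ((Img.erase (φ k))) (φ k)).card
                  ≤ (8*t)^(η - H.dist r (e k)) :=
                    killer_card_le_pow G t s0 hK ht hs0 _ _ _ _ hkv
                _ ≤ (8*t)^η := Nat.pow_le_pow_right (by omega) (by omega)
            _ ≤ n * (8*t)^η := by
              rw [Finset.sum_const, smul_eq_mul]
              apply Nat.mul_le_mul_right
              calc (Finset.univ.filter (fun k : Fin n => k.val < i)).card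
                  ≤ (Finset.univ : Finset (Fin n)).card := Finset.card_le_card
                    (Finset.filter_subset _ _)
                _ = n := by simp
        -- choose the new image
        have hex : 0 < (P \ X).card := by
          have := le_card_sdiff X P
          omega
        obtain ⟨x₀, hx₀⟩ := Finset.card_pos.1 hex
        rw [Finset.mem_sdiff] at hx₀
        obtain ⟨hx₀P, hx₀X⟩ := hx₀
        obtain ⟨hx₀nbr, hx₀cl, hx₀v⟩ := (mem_pool_succ G t s0).1 hx₀P
        have hx₀adj : G.Adj (φ kp) x₀ := (mem_nbr G).1 hx₀nbr
        have hx₀nkp : x₀ ≠ φ kp := fun h => G.irrefl (h ▸ hx₀adj)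
        have hx₀nImg : x₀ ∉ Img := by
          intro hmem
          by_cases hq : x₀ = φ kp
          · exact hx₀nkp hq
          · apply hx₀cl
            rw [cl]
            apply Finset.mem_biUnion.2
            refine ⟨x₀, ?_, Finset.mem_insert_self _ _⟩
            rw [hFp]
            exact Finset.mem_erase.2 ⟨hq, hmem⟩
        -- non-adjacency to all old vertices except parent
        have hx₀notadj : ∀ k : Fin n, k.val < i → k ≠ kp → ¬ G.Adj (φ k) x₀ := by
          intro k hk hkkp hadj'
          apply hx₀cl
          rw [cl]
          apply Finset.mem_biUnion.2
          refine ⟨φ k, ?_, Finset.mem_insert_of_mem ((mem_nbr G).2 hadj')⟩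
          rw [hFp]
          refine Finset.mem_erase.2 ⟨?_, ?_⟩
          · exact hinj k kp hk hkpi hkkp
          · rw [hImg]
            exact Finset.mem_image.2 ⟨k, by simp [hk], rfl⟩
        -- the update
        set φ' : Fin n → V := Function.update φ ki x₀ with hφ'
        have hφ'old : ∀ k : Fin n, k.val < i → φ' k = φ k := by
          intro k hk
          apply Function.update_of_ne
          intro hcon
          have hvv := congrArg Fin.val hcon
          have hkiv : ki.val = i := rfl
          omega
        have hφ'ki : φ' ki = x₀ := Function.update_self _ _ _
        -- new image set
        have hfilter : (Finset.univ.filter (fun l : Fin n => l.val < i+1)) =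
            insert ki (Finset.univ.filter (fun l : Fin n => l.val < i)) := by
          ext l
          simp only [Finset.mem_filter, Finset.mem_univ, true_and, Finset.mem_insert]
          constructor
          · intro hl
            by_cases hli : l.val = i
            · left; exact Fin.ext hli
            · right; omega
          · intro hl
            rcases hl with rfl | hl
            · have hkiv : ki.val = i := rfl
              omega
            · omega
        have hImg' : (Finset.univ.filter (fun l : Fin n => l.val < i+1)).image φ' =
            insert x₀ Img := by
          rw [hfilter, Finset.image_insert, hφ'ki]
          congr 1
          rw [hImg]
          apply Finset.image_congr
          intro k hk
          simp only [Finset.mem_coe, Finset.mem_filter, Finset.mem_univ, true_and] at hk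
          exact hφ'old k hk
        refine ⟨φ', ?_, ?_, ?_⟩
        · -- injectivity
          intro k l hk hl hkl
          by_cases hknew : k = ki
          · subst hknew
            have hlold : l.val < i := by
              have hvne := Fin.val_ne_of_ne hkl
              have hkiv : ki.val = i := rfl
              omega
            rw [hφ'ki, hφ'old l hlold]
            intro hcon
            apply hx₀nImg
            rw [hImg]
            exact hcon ▸ Finset.mem_image.2 ⟨l, by simp [hlold], rfl⟩
          · by_cases hlnew : l = ki
            · subst hlnew
              have hkold : k.val < i := by
                have hvne := Fin.val_ne_of_ne hkl
                have hkiv : ki.val = i := rfl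
                omega
              rw [hφ'ki, hφ'old k hkold]
              intro hcon
              apply hx₀nImg
              rw [hImg]
              exact hcon ▸ Finset.mem_image.2 ⟨k, by simp [hkold], rfl⟩
            · have hkold : k.val < i := by
                have hvne := Fin.val_ne_of_ne hknew
                have hkiv : ki.val = i := rfl
                omega
              have hlold : l.val < i := by
                have hvne := Fin.val_ne_of_ne hlnew
                have hkiv : ki.val = i := rfl
                omega
              rw [hφ'old k hkold, hφ'old l hlold]
              exact hinj k l hkold hlold hkl
        · -- adjacency iff
          intro k l hk hl
          by_cases hknew : k = ki <;> by_cases hlnew : l = ki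
          · subst hknew; subst hlnew
            rw [hφ'ki]
            constructor
            · intro h; exact absurd h (H.irrefl)
            · intro h; exact absurd h (G.irrefl)
          · -- k = ki, l old
            subst hknew
            have hlold : l.val < i := by
              have hvne := Fin.val_ne_of_ne hlnew
              have hkiv : ki.val = i := rfl
              omega
            rw [hφ'ki, hφ'old l hlold]
            constructor
            · intro hHadj
              -- l must be the parent
              have hdl : H.dist r (e l) ≤ H.dist r w := by
                have : l ≤ ki := by
                  rw [Fin.le_def]
                  have hkiv : ki.val = i := rfl
                  omega
                exact hmono this
              have hdl' : H.dist r (e l) + 1 = H.dist r w := by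
                rcases tree_adj_dist (r := r) hH hHadj with hc | hc
                · rw [← hwdef] at hc; omega
                · rw [← hwdef] at hc; omega
              have hHadj2 : H.Adj w (e l) := by rw [hwdef]; exact hHadj
              have : e l = x := tree_parent_unique hH hHadj2 hadjwx hdl' hdx
              have hlkp : l = kp := by
                rw [hkp]
                exact e.injective (by rw [this, hekp])
              rw [hlkp]
              exact hx₀adj.symm
            · intro hGadj
              by_cases hlkp : l = kp
              · subst hlkp
                rw [hekp, ← hwdef]
                exact hadjwx
              · exact absurd hGadj.symm (hx₀notadj l hlold hlkp)
          · -- k old, l = ki : symmetric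
            subst hlnew
            have hkold : k.val < i := by
              have hvne := Fin.val_ne_of_ne hknew
              have hkiv : ki.val = i := rfl
              omega
            rw [hφ'ki, hφ'old k hkold]
            constructor
            · intro hHadj
              have hdl : H.dist r (e k) ≤ H.dist r w := by
                have : k ≤ ki := by
                  rw [Fin.le_def]
                  have hkiv : ki.val = i := rfl
                  omega
                exact hmono this
              have hdl' : H.dist r (e k) + 1 = H.dist r w := by
                rcases tree_adj_dist (r := r) hH hHadj with hc | hc
                · rw [← hwdef] at hc; omega
                · rw [← hwdef] at hc; omega
              have hHadj2 : H.Adj w (e k) := by rw [hwdef]; exact hHadj.symm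
              have : e k = x := tree_parent_unique hH hHadj2 hadjwx hdl' hdx
              have hlkp : k = kp := by
                rw [hkp]
                exact e.injective (by rw [this, hekp])
              rw [hlkp]
              exact hx₀adj
            · intro hGadj
              by_cases hlkp : k = kp
              · subst hlkp
                rw [hekp, ← hwdef]
                exact hadjwx.symm
              · exact absurd hGadj (hx₀notadj k hkold hlkp)
          · -- both old
            have hkold : k.val < i := by
              have hvne := Fin.val_ne_of_ne hknew
              have hkiv : ki.val = i := rfl
              omega
            have hlold : l.val < i := by
              have hvne := Fin.val_ne_of_ne hlnew
              have hkiv : ki.val = i := rfl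
              omega
            rw [hφ'old k hkold, hφ'old l hlold]
            exact hadj k l hkold hlold
        · -- viability
          intro k hk
          by_cases hknew : k = ki
          · subst hknew
            rw [hφ'ki, hImg']
            have herase : (insert x₀ Img).erase x₀ = Img := by
              apply Finset.erase_insert hx₀nImg
            rw [herase]
            have hImgeq : Img = insert (φ kp) Fp := by
              rw [hFp]
              rw [Finset.insert_erase]
              rw [hImg]
              exact Finset.mem_image.2 ⟨kp, by simp [hkpi], rfl⟩
            rw [hImgeq]
            rw [← hwdef]
            have hx₀v' := hx₀v
            have hbud : n + 2 - i = (n + 2 - (i+1)) + 1 := by omega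
            rw [hbud] at hx₀v'
            exact viable_mono_budget G t s0 ht _ _ _ _ hx₀v'
          · have hkold : k.val < i := by
              have hvne := Fin.val_ne_of_ne hknew
              have hkiv : ki.val = i := rfl
              omega
            rw [hφ'old k hkold, hImg']
            have herase : (insert x₀ Img).erase (φ k) = insert x₀ (Img.erase (φ k)) := by
              apply Finset.erase_insert_of_ne
              intro hcon
              apply hx₀nImg
              rw [hImg]
              exact Finset.mem_image.2 ⟨k, by simp [hkold], hcon.symm⟩
            rw [herase]
            have hbud : n + 2 - i = (n + 2 - (i+1)) + 1 := by omega
            have hv := hviab k hkold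
            rw [hbud] at hv
            have hnk : x₀ ∉ killer G t s0 (η - H.dist r (e k)) ((n+2-(i+1))+1)
                (Img.erase (φ k)) (φ k) := by
              intro hc
              apply hx₀X
              rw [hX]
              apply Finset.mem_biUnion.2
              refine ⟨k, by simp [hkold], ?_⟩
              rw [← hbud] at hc
              exact hc
            exact viable_degrade G t s0 ht _ _ _ _ _ hv hnk
  -- conclude
  obtain ⟨φ, hinj, hadj, _⟩ := main n (by omega) (le_refl n)
  refine ⟨fun a => φ (e.symm a), ?_, ?_⟩
  · intro a b hab
    by_contra hne
    exact hinj (e.symm a) (e.symm b) (Fin.is_lt _) (Fin.is_lt _)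
      (fun h => hne (by rw [← e.apply_symm_apply a, ← e.apply_symm_apply b, h])) hab
  · intro a b
    have := hadj (e.symm a) (e.symm b) (Fin.is_lt _) (Fin.is_lt _)
    rwa [e.apply_symm_apply, e.apply_symm_apply] at this
end core3

open scoped Classical in
/-- greedy colouring from a degeneracy-type condition -/
lemma colorable_of_deg (m : ℕ) :
    ∀ (N : ℕ) {V : Type u} [Fintype V] [DecidableEq V] (G : SimpleGraph V),
      Fintype.card V ≤ N →
      (∀ s : Finset V, s.Nonempty → ∃ v ∈ s, (s.filter (G.Adj v)).card ≤ m) →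
      G.Colorable (m+1) := by
  intro N
  induction N with
  | zero =>
    intro V _ _ G hcard _
    have : IsEmpty V := by
      rw [← Fintype.card_eq_zero_iff]
      omega
    exact ⟨SimpleGraph.Coloring.mk isEmptyElim (fun {v} => isEmptyElim v)⟩
  | succ N ih =>
    intro V _ _ G hcard hdeg
    by_cases hV : IsEmpty V
    · exact ⟨SimpleGraph.Coloring.mk isEmptyElim (fun {v} => isEmptyElim v)⟩
    · rw [not_isEmpty_iff] at hV
      have huniv : (Finset.univ : Finset V).Nonempty := Finset.univ_nonempty
      obtain ⟨v, _, hvdeg⟩ := hdeg Finset.univ huniv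
      -- the graph without v
      set G' : SimpleGraph {u : V // u ≠ v} := G.comap (Subtype.val) with hG'
      have hcard' : Fintype.card {u : V // u ≠ v} ≤ N := by
        have h2 : Fintype.card {u : V // u ≠ v} < Fintype.card V :=
          Fintype.card_subtype_lt (x := v) (by simp)
        omega
      have hdeg' : ∀ s : Finset {u : V // u ≠ v}, s.Nonempty →
          ∃ u ∈ s, (s.filter (G'.Adj u)).card ≤ m := by
        intro s hs
        have hsim : (s.image Subtype.val).Nonempty := hs.image _
        obtain ⟨v₀, hv₀, hv₀deg⟩ := hdeg (s.image Subtype.val) hsim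
        obtain ⟨u, hu, rfl⟩ := Finset.mem_image.1 hv₀
        refine ⟨u, hu, ?_⟩
        calc (s.filter (G'.Adj u)).card
            = ((s.filter (G'.Adj u)).image Subtype.val).card :=
              (Finset.card_image_of_injective _ Subtype.val_injective).symm
          _ ≤ ((s.image Subtype.val).filter (G.Adj ↑u)).card := by
              apply Finset.card_le_card
              intro x hx
              obtain ⟨w, hw, rfl⟩ := Finset.mem_image.1 hx
              rw [Finset.mem_filter] at hw ⊢
              exact ⟨Finset.mem_image_of_mem _ hw.1, hw.2⟩
          _ ≤ m := hv₀deg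
      obtain ⟨c'⟩ := ih G' hcard' hdeg'
      -- find a free colour for v
      set C : Finset (Fin (m+1)) :=
        (Finset.univ.filter (fun u : {u : V // u ≠ v} => G.Adj v ↑u)).image c' with hC
      have hCcard : C.card ≤ m := by
        calc C.card ≤ (Finset.univ.filter (fun u : {u : V // u ≠ v} => G.Adj v ↑u)).card :=
            Finset.card_image_le
          _ = ((Finset.univ.filter (fun u : {u : V // u ≠ v} => G.Adj v ↑u)).image
                Subtype.val).card :=
              (Finset.card_image_of_injective _ Subtype.val_injective).symm
          _ ≤ ((Finset.univ : Finset V).filter (G.Adj v)).card := by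
              apply Finset.card_le_card
              intro x hx
              obtain ⟨w, hw, rfl⟩ := Finset.mem_image.1 hx
              rw [Finset.mem_filter] at hw ⊢
              exact ⟨Finset.mem_univ _, hw.2⟩
          _ ≤ m := hvdeg
      have hfree : (Cᶜ).Nonempty := by
        rw [← Finset.card_pos, Finset.card_compl]
        have : Fintype.card (Fin (m+1)) = m+1 := Fintype.card_fin _
        omega
      obtain ⟨c₀, hc₀⟩ := hfree
      rw [Finset.mem_compl] at hc₀
      -- build the colouring
      refine ⟨SimpleGraph.Coloring.mk
        (fun u => if h : u = v then c₀ else c' ⟨u, h⟩) ?_⟩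
      intro a b hab
      by_cases ha : a = v <;> by_cases hb : b = v
      · exact absurd (ha ▸ hb ▸ hab) (G.irrefl)
      · subst ha
        simp only [dif_pos rfl, dif_neg hb]
        intro hcon
        apply hc₀
        rw [hC]
        apply Finset.mem_image.2
        refine ⟨⟨b, hb⟩, ?_, hcon.symm⟩
        rw [Finset.mem_filter]
        exact ⟨Finset.mem_univ _, hab⟩
      · subst hb
        simp only [dif_pos rfl, dif_neg ha]
        intro hcon
        apply hc₀
        rw [hC]
        apply Finset.mem_image.2
        refine ⟨⟨a, ha⟩, ?_, hcon⟩
        rw [Finset.mem_filter]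
        exact ⟨Finset.mem_univ _, hab.symm⟩
      · simp only [dif_neg ha, dif_neg hb]
        have : G'.Adj ⟨a, ha⟩ ⟨b, hb⟩ := hab
        exact c'.valid this

lemma fact_ge_pow (η : ℕ) : 6 * 4^η ≤ (η+3).factorial := by
  induction η with
  | zero => simp [Nat.factorial]
  | succ η ih =>
    have h1 : (η+4).factorial = (η+4) * (η+3).factorial := rfl
    have h2 : 4 * (6 * 4^η) ≤ (η+4) * (η+3).factorial :=
      Nat.mul_le_mul (by omega) ih
    calc 6 * 4^(η+1) = 4 * (6 * 4^η) := by ring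
      _ ≤ (η+4) * (η+3).factorial := h2
      _ = (η+3+1).factorial := rfl

lemma seven_le : ∀ η : ℕ, 1 ≤ η → 7*η+5 ≤ 6*4^η := by
  intro η
  induction η with
  | zero => omega
  | succ η ih =>
    intro _
    rcases Nat.eq_zero_or_pos η with rfl | hpos
    · norm_num
    · have h := ih hpos
      have h2 : 6*4^(η+1) = 4*(6*4^η) := by ring
      omega

lemma arith_final (n ζ t η : ℕ) (hn : 2 ≤ n) (hη : 1 ≤ η) (ht : 1 ≤ t) (hζ : 2 ≤ ζ) :
    η * (sig t (n*(8*t)^η + 4*t + 2) (n+1+η) + (8*t)^η) ≤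
      (n*ζ*t)^((η+3).factorial * n) := by
  set M := n*ζ*t with hM
  have hM4 : 4 ≤ M := by
    have h1 : 2*2*1 ≤ n*ζ*t := Nat.mul_le_mul (Nat.mul_le_mul hn hζ) ht
    omega
  have hM2t : 2*t ≤ M := by
    calc 2*t = 1*2*t := by ring
      _ ≤ n*ζ*t := Nat.mul_le_mul (Nat.mul_le_mul (by omega) hζ) (le_refl t)
  have hMn : n ≤ M := by
    calc n = n*1*1 := by ring
      _ ≤ n*ζ*t := Nat.mul_le_mul (Nat.mul_le_mul (le_refl n) (by omega)) ht
  -- step 1 : 8*t ≤ M^3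
  have h8t : 8*t ≤ M^3 := by
    have ht3 : t ≤ t^3 := Nat.le_self_pow (by omega) t
    calc 8*t ≤ 8*t^3 := Nat.mul_le_mul_left 8 ht3
      _ = (2*t)^3 := by ring
      _ ≤ M^3 := Nat.pow_le_pow_left hM2t 3
  -- step 2 : s0 ≤ 2n(8t)^η
  have hs0le : n*(8*t)^η + 4*t + 2 ≤ 2*n*(8*t)^η := by
    have h1 : 4*t + 2 ≤ (8*t)^η := by
      calc 4*t+2 ≤ 8*t := by omega
        _ = (8*t)^1 := by ring
        _ ≤ (8*t)^η := Nat.pow_le_pow_right (by omega) hη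
    have h2 : (8*t)^η ≤ n*(8*t)^η := by
      calc (8*t)^η = 1*(8*t)^η := by ring
        _ ≤ n*(8*t)^η := Nat.mul_le_mul_right _ (by omega)
    calc n*(8*t)^η + 4*t + 2 ≤ n*(8*t)^η + (8*t)^η := by omega
      _ ≤ n*(8*t)^η + n*(8*t)^η := by omega
      _ = 2*n*(8*t)^η := by ring
  -- step 3 : sig ≤ 2n(8t)^{2η+n+1}
  have hsig : sig t (n*(8*t)^η + 4*t + 2) (n+1+η) ≤ 2*n*(8*t)^(2*η+n+1) := by
    rw [sig]
    have ha : (4*t)^(n+1+η) ≤ (8*t)^(n+1+η) := Nat.pow_le_pow_left (by omega) _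
    have hb := Nat.mul_le_mul hs0le ha
    have hc : (2*n*(8*t)^η) * (8*t)^(n+1+η) = 2*n*(8*t)^(2*η+n+1) := by
      rw [mul_assoc, ← pow_add]
      have he : η+(n+1+η) = 2*η+n+1 := by omega
      rw [he]
    calc (n*(8*t)^η + 4*t + 2) * (4*t)^(n+1+η) ≤ (2*n*(8*t)^η) * (8*t)^(n+1+η) := hb
      _ = 2*n*(8*t)^(2*η+n+1) := hc
  -- step 4 : whole LHS ≤ 3ηn(8t)^{2η+n+1}
  have hlhs : η * (sig t (n*(8*t)^η + 4*t + 2) (n+1+η) + (8*t)^η) ≤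
      3*η*n*(8*t)^(2*η+n+1) := by
    have h1 : (8*t)^η ≤ (8*t)^(2*η+n+1) := Nat.pow_le_pow_right (by omega) (by omega)
    have h2 : (8*t)^(2*η+n+1) ≤ n*(8*t)^(2*η+n+1) := by
      calc (8*t)^(2*η+n+1) = 1*(8*t)^(2*η+n+1) := by ring
        _ ≤ n*(8*t)^(2*η+n+1) := Nat.mul_le_mul_right _ (by omega)
    calc η * (sig t (n*(8*t)^η + 4*t + 2) (n+1+η) + (8*t)^η)
        ≤ η * (2*n*(8*t)^(2*η+n+1) + n*(8*t)^(2*η+n+1)) := by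
          apply Nat.mul_le_mul_left
          omega
      _ = 3*η*n*(8*t)^(2*η+n+1) := by ring
  -- step 5 : 3ηn ≤ M^{η+2}
  have hfac : 3*η*n ≤ M^(η+2) := by
    have hη2 : η ≤ 2^η := Nat.lt_two_pow_self (n := η) |>.le
    have hηM : η ≤ M^η := by
      calc η ≤ 2^η := hη2
        _ ≤ M^η := Nat.pow_le_pow_left (by omega) η
    have hs1 : 3*η*n ≤ M*η*n :=
      Nat.mul_le_mul (Nat.mul_le_mul (by omega) (le_refl η)) (le_refl n)
    have hs2 : M*η*n ≤ M*(M^η)*M :=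
      Nat.mul_le_mul (Nat.mul_le_mul (le_refl M) hηM) hMn
    have hs3 : M*(M^η)*M = M^(η+2) := by ring
    omega
  -- step 6 : combine
  have hcomb : 3*η*n*(8*t)^(2*η+n+1) ≤ M^(η+2) * (M^3)^(2*η+n+1) := by
    apply Nat.mul_le_mul hfac
    exact Nat.pow_le_pow_left h8t _
  have hpow : M^(η+2) * (M^3)^(2*η+n+1) = M^(7*η+3*n+5) := by
    rw [← pow_mul, ← pow_add]
    ring_nf
  have hexp : 7*η+3*n+5 ≤ (η+3).factorial * n := by
    have h1 : 6*4^η ≤ (η+3).factorial := fact_ge_pow η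
    have h2 : 6*4^η*n ≤ (η+3).factorial * n := Nat.mul_le_mul_right _ h1
    have h3 : 7*η + 5 ≤ 3*4^η*n := by
      have h4 : 7*η+5 ≤ 6*4^η := seven_le η hη
      have h5 : 6*4^η ≤ 3*4^η*n := by
        calc 6*4^η = 3*4^η*2 := by ring
          _ ≤ 3*4^η*n := Nat.mul_le_mul_left _ hn
      omega
    have h6 : 3*n ≤ 3*4^η*n := by
      have : (1:ℕ) ≤ 4^η := Nat.one_le_pow _ _ (by omega)
      calc 3*n = 3*1*n := by ring
        _ ≤ 3*4^η*n := Nat.mul_le_mul (Nat.mul_le_mul_left _ this) (le_refl n)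
    have h7 : 3*4^η*n + 3*4^η*n = 6*4^η*n := by ring
    omega
  calc η * (sig t (n*(8*t)^η + 4*t + 2) (n+1+η) + (8*t)^η)
      ≤ 3*η*n*(8*t)^(2*η+n+1) := hlhs
    _ ≤ M^(η+2) * (M^3)^(2*η+n+1) := hcomb
    _ = M^(7*η+3*n+5) := hpow
    _ ≤ M^((η+3).factorial * n) := Nat.pow_le_pow_right (by omega) hexp

theorem stmt_12 {W : Type*} [Fintype W] (H : SimpleGraph W) (hH : H.IsTree) (r : W)
    (η ζ t : ℕ) (hζ : 2 ≤ ζ) (ht : 1 ≤ t)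
    (hheight : ∀ w : W, H.dist r w ≤ η)
    (hspread : ∀ u : W, {w : W | H.Adj u w ∧ H.dist r w = H.dist r u + 1}.ncard ≤ ζ)
    {V : Type*} [Fintype V] (G : SimpleGraph V)
    (hHfree : ¬ Nonempty (H ↪g G))
    (hKtt : ¬ ContainsSub (Kpart 2 t) G) :
    (∀ s : Finset V, s.Nonempty → ∃ v ∈ s,
        {w : V | w ∈ s ∧ G.Adj v w}.ncard ≤ (Fintype.card W * ζ * t) ^ ((η + 3).factorial * Fintype.card W)) ∧
    G.chromaticNumber ≤
      ((Fintype.card W * ζ * t) ^ ((η + 3).factorial * Fintype.card W) + 1 : ℕ) := by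
  classical
  set n := Fintype.card W with hn
  have hn1 : 1 ≤ n := by
    rw [hn]
    have : Nonempty W := hH.isConnected.nonempty
    exact Fintype.card_pos
  set B := (Fintype.card W * ζ * t) ^ ((η + 3).factorial * Fintype.card W) with hB
  have PART1 : ∀ s : Finset V, s.Nonempty → ∃ v ∈ s,
      {w : V | w ∈ s ∧ G.Adj v w}.ncard ≤ B := by
    by_contra hcon
    push_neg at hcon
    obtain ⟨s, hsne, hbig⟩ := hcon
    have hbig' : ∀ v ∈ s, B + 1 ≤ (s.filter (G.Adj v)).card := by
      intro v hv
      have h1 := hbig v hv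
      have h2 : {w : V | w ∈ s ∧ G.Adj v w} = ↑(s.filter (G.Adj v)) := by
        ext w
        simp [Finset.mem_filter]
      rw [h2, Set.ncard_coe_finset] at h1
      omega
    obtain ⟨v₀, hv₀⟩ := hsne
    -- n ≥ 2
    have hn2 : 2 ≤ n := by
      by_contra hle
      have hn1' : n = 1 := by omega
      have hsub : Subsingleton W := by
        apply Fintype.card_le_one_iff_subsingleton.1
        omega
      apply hHfree
      refine ⟨⟨⟨fun _ => v₀, fun a b _ => Subsingleton.elim a b⟩, ?_⟩⟩
      intro a b
      apply iff_of_false (G.irrefl)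
      have hab : a = b := Subsingleton.elim a b
      rw [hab]
      exact H.irrefl
    -- η ≥ 1
    have hη1 : 1 ≤ η := by
      by_contra h0
      have hη0 : η = 0 := by omega
      have hall : ∀ w : W, w = r := by
        intro w
        have h1 := hheight w
        rw [hη0] at h1
        exact (tree_dist_zero_iff hH).1 (by omega)
      have hsub : Subsingleton W := ⟨fun a b => by rw [hall a, hall b]⟩
      have : n ≤ 1 := by
        rw [hn]
        exact Fintype.card_le_one_iff_subsingleton.2 hsub
      omega
    -- move to the induced subgraph on s
    set G' : SimpleGraph {x : V // x ∈ s} := G.comap Subtype.val with hG'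
    have hK' : ¬ ContainsSub (Kpart 2 t) G' := by
      rintro ⟨f, hfinj, hfadj⟩
      exact hKtt ⟨fun p => ↑(f p), Subtype.val_injective.comp hfinj,
        fun a b hab => hfadj a b hab⟩
    have hVne' : Nonempty {x : V // x ∈ s} := ⟨⟨v₀, hv₀⟩⟩
    set s0 := n*(8*t)^η + 4*t + 2 with hs0def
    have hs0 : 4*t+2 ≤ s0 := by omega
    have hs0' : n*(8*t)^η + 1 ≤ s0 := by omega
    have hdeg' : ∀ v' : {x : V // x ∈ s}, B+1 ≤ (nbr G' v').card := by
      intro v'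
      have h1 := hbig' ↑v' v'.2
      have h2 : ((Finset.univ.filter (fun w' : {x : V // x ∈ s} => G'.Adj v' w')).image
          Subtype.val) = s.filter (G.Adj ↑v') := by
        ext x
        simp only [Finset.mem_image, Finset.mem_filter, Finset.mem_univ, true_and]
        constructor
        · rintro ⟨w', hw', rfl⟩
          exact ⟨w'.2, hw'⟩
        · rintro ⟨hx, hadj⟩
          exact ⟨⟨x, hx⟩, hadj, rfl⟩
      have h3 : (nbr G' v').card = (s.filter (G.Adj ↑v')).card := by
        rw [← h2]
        rw [Finset.card_image_of_injective _ Subtype.val_injective]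
        rfl
      omega
    have hD : η*(sig t s0 (n+1+η) + (8*t)^η) < B+1 := by
      have harith := arith_final n ζ t η hn2 hη1 ht hζ
      rw [hs0def]
      rw [hB, ← hn]
      omega
    obtain ⟨ystar, hystar⟩ := exists_viable G' t s0 hK' ht hs0 n η (B+1) hdeg' hD hVne'
    obtain ⟨e, hmono, he0⟩ := exists_sorted_equiv H hH r n hn (by omega)
    obtain ⟨Φ, hΦinj, hΦiff⟩ := embed_main G' t s0 H hH r η hheight hK' ht hs0 n hn hn1
      hs0' e hmono (by omega) he0 ystar hystar
    apply hHfree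
    refine ⟨⟨⟨fun w => ↑(Φ w), fun a b hab => hΦinj (Subtype.val_injective hab)⟩, ?_⟩⟩
    intro a b
    exact (hΦiff a b).symm
  refine ⟨PART1, ?_⟩
  have hcol : G.Colorable (B+1) := by
    apply colorable_of_deg B (Fintype.card V) G (le_refl _)
    intro s hs
    obtain ⟨v, hv, hcard⟩ := PART1 s hs
    refine ⟨v, hv, ?_⟩
    have h2 : {w : V | w ∈ s ∧ G.Adj v w} = ↑(s.filter (G.Adj v)) := by
      ext w
      simp [Finset.mem_filter]
    rw [h2, Set.ncard_coe_finset] at hcard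
    exact hcard
  exact hcol.chromaticNumber_le
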